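/- Fix n ∈ ℕ and real parameters a, b, α, β, s. Assume (a−b+1|q)_n ≠ 0, (β+1|q)_n (a+b+α+1|q)_n ≠ 0 and (α+1|q)_n (−a−b+β+1|q)_n ≠ 0. Then (β+1|q)_n (a+b+α+1|q)_n · Σ_{k=0}^{n} [(−n|q)_k (α+β+n+1|q)_k (a−s|q)_k (a+s+1|q)_k] / [(1|q)_k (a−b+1|q)_k (β+1|q)_k (a+b+α+1|q)_k] = (α+1|q)_n (−a−b+β+1|q)_n · Σ_{k=0}^{n} [(−n|q)_k (α+β+n+1|q)_k (−b−s|q)_k (−b+s+1|q)_k] / [(1|q)_k (a−b+1|q)_k (α+1|q)_k (−a−b+β+1|q)_k]. Equivalently, the q-Racah polynomial u_n^{α,β}(x(s),a,b)_q also equals ((a−b+1|q)_n (α+1|q)_n (−a−b+β+1|q)_n / [n]_q!) times the second sum. -/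

import Mathlib

open Finset

/-- The symmetric q-number `[s]_q = (q^{s/2} - q^{-s/2})/(q^{1/2} - q^{-1/2})`. -/
noncomputable def qnum (q s : ℝ) : ℝ :=
  (q ^ (s / 2) - q ^ (-s / 2)) / (q ^ ((1 : ℝ) / 2) - q ^ (-(1 : ℝ) / 2))

/-- The symmetric q-factorial `[n]_q! = ∏_{m=1}^n [m]_q`. -/
noncomputable def qfact (q : ℝ) (n : ℕ) : ℝ :=
  ∏ m ∈ Finset.range n, qnum q ((m : ℝ) + 1)

/-- The symmetric q-Pochhammer symbol `(a|q)_k = ∏_{m=0}^{k-1} [a+m]_q`. -/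
noncomputable def qpoch (q a : ℝ) (k : ℕ) : ℝ :=
  ∏ m ∈ Finset.range k, qnum q (a + (m : ℝ))

/-- The q-Racah polynomial `u_n^{α,β}(x(s),a,b)_q` on the lattice `x(s)=[s]_q[s+1]_q`. -/
noncomputable def racahU (q a b α β : ℝ) (n : ℕ) (s : ℝ) : ℝ :=
  qpoch q (a - b + 1) n * qpoch q (β + 1) n * qpoch q (a + b + α + 1) n / qfact q n *
    ∑ k ∈ Finset.range (n + 1),
      qpoch q (-(n : ℝ)) k * qpoch q (α + β + (n : ℝ) + 1) k * qpoch q (a - s) k *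
          qpoch q (a + s + 1) k /
        (qpoch q 1 k * qpoch q (a - b + 1) k * qpoch q (β + 1) k *
          qpoch q (a + b + α + 1) k)

/-- The alternative q-Racah polynomial `ũ_n^{α,β}(x(s),a,b)_q`. -/
noncomputable def racahUt (q a b α β : ℝ) (n : ℕ) (s : ℝ) : ℝ :=
  qpoch q (a - b + 1) n * qpoch q (2 * a - β + 1) n * qpoch q (a - b - α + 1) n / qfact q n *
    ∑ k ∈ Finset.range (n + 1),
      qpoch q (-(n : ℝ)) k * qpoch q (2 * a - 2 * b - α - β + (n : ℝ) + 1) k *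
          qpoch q (a - s) k * qpoch q (a + s + 1) k /
        (qpoch q 1 k * qpoch q (a - b + 1) k * qpoch q (2 * a - β + 1) k *
          qpoch q (a - b - α + 1) k)

/-- `σ(s) = [s-a]_q [s+b]_q [s+a-β]_q [b+α-s]_q`. -/
noncomputable def racahSigma (q a b α β s : ℝ) : ℝ :=
  qnum q (s - a) * qnum q (s + b) * qnum q (s + a - β) * qnum q (b + α - s)

/-- `σ(-s-1) = [s+a+1]_q [b-s-1]_q [s-a+β+1]_q [b+α+s+1]_q`. -/
noncomputable def racahSigmaM (q a b α β s : ℝ) : ℝ :=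
  qnum q (s + a + 1) * qnum q (b - s - 1) * qnum q (s - a + β + 1) * qnum q (b + α + s + 1)

/-- `σ̃(s) = [s-a]_q [s+b]_q [s-a+β]_q [b+α+s]_q`. -/
noncomputable def racahSigmaT (q a b α β s : ℝ) : ℝ :=
  qnum q (s - a) * qnum q (s + b) * qnum q (s - a + β) * qnum q (b + α + s)

/-- `σ̃(-s-1) = [s+a+1]_q [b-s-1]_q [s+a-β+1]_q [b+α-s-1]_q`. -/
noncomputable def racahSigmaTM (q a b α β s : ℝ) : ℝ :=
  qnum q (s + a + 1) * qnum q (b - s - 1) * qnum q (s + a - β + 1) * qnum q (b + α - s - 1)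

/-- `τ_n(s)` for the q-Racah polynomials. -/
noncomputable def racahTau (q a b α β : ℝ) (n : ℕ) (s : ℝ) : ℝ :=
  -qnum q (α + β + 2 * (n : ℝ) + 2) * qnum q (s + (n : ℝ) / 2) * qnum q (s + (n : ℝ) / 2 + 1) +
    qnum q (a + (n : ℝ) / 2 + 1) * qnum q (b - (n : ℝ) / 2 - 1) *
      qnum q (β + (n : ℝ) / 2 + 1 - a) * qnum q (b + α + (n : ℝ) / 2 + 1) -
    qnum q (a + (n : ℝ) / 2) * qnum q (b - (n : ℝ) / 2) * qnum q (β + (n : ℝ) / 2 - a) *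
      qnum q (b + α + (n : ℝ) / 2)

namespace QRacahAux

/-- `E(u) = q^{u/2} - q^{-u/2}`. -/
noncomputable def ee (q u : ℝ) : ℝ := q ^ (u / 2) - q ^ (-u / 2)

/-- Clean symmetric q-Pochhammer: `∏_{m<k} E(a+m)`. -/
noncomputable def PP (q a : ℝ) (k : ℕ) : ℝ := ∏ m ∈ Finset.range k, ee q (a + (m : ℝ))

variable {q : ℝ}

lemma ee_zero : ee q 0 = 0 := by simp [ee]

lemma ee_neg (u : ℝ) : ee q (-u) = -ee q u := by
  simp only [ee, neg_div, neg_neg]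
  ring

lemma ee_ne_zero (hq0 : 0 < q) (hq1 : q ≠ 1) {u : ℝ} (hu : u ≠ 0) : ee q u ≠ 0 := by
  intro h
  apply hu
  have h2 : q ^ (u / 2) = q ^ (-u / 2) := by
    have : q ^ (u / 2) - q ^ (-u / 2) = 0 := h
    linarith
  have h3 : (u / 2) * Real.log q = (-u / 2) * Real.log q := by
    calc (u / 2) * Real.log q = Real.log (q ^ (u / 2)) := (Real.log_rpow hq0 _).symm
    _ = Real.log (q ^ (-u / 2)) := by rw [h2]
    _ = (-u / 2) * Real.log q := Real.log_rpow hq0 _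
  have hlog : Real.log q ≠ 0 := by
    simp only [ne_eq, Real.log_eq_zero]
    push_neg
    exact ⟨hq0.ne', hq1, by linarith⟩
  have := mul_right_cancel₀ hlog h3
  linarith

lemma ee3 (hq0 : 0 < q) (p r s : ℝ) :
    ee q p * ee q (r + s) = ee q (p + s) * ee q r + ee q s * ee q (p - r) := by
  have hne : ∀ u : ℝ, q ^ (u : ℝ) ≠ 0 := fun u => (Real.rpow_pos_of_pos hq0 u).ne'
  simp only [ee]
  rw [show (r + s) / 2 = r/2 + s/2 by ring, show -(r+s)/2 = -(r/2) + -(s/2) by ring,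
    show (p + s)/2 = p/2 + s/2 by ring, show -(p+s)/2 = -(p/2) + -(s/2) by ring,
    show (p - r)/2 = p/2 + -(r/2) by ring, show -(p-r)/2 = -(p/2) + r/2 by ring,
    show -p/2 = -(p/2) by ring, show -r/2 = -(r/2) by ring, show -s/2 = -(s/2) by ring]
  simp only [Real.rpow_add hq0, Real.rpow_neg hq0.le]
  field_simp
  ring

lemma PP_zero (a : ℝ) : PP q a 0 = 1 := by simp [PP]

lemma PP_succ (a : ℝ) (k : ℕ) : PP q a (k + 1) = PP q a k * ee q (a + k) := by
  simp [PP, Finset.prod_range_succ]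

lemma PP_succ' (a : ℝ) (k : ℕ) : PP q a (k + 1) = ee q a * PP q (a + 1) k := by
  rw [PP, Finset.prod_range_succ']
  simp only [Nat.cast_add, Nat.cast_one, Nat.cast_zero, add_zero, PP]
  rw [mul_comm]
  congr 1
  apply Finset.prod_congr rfl
  intro m _
  congr 1
  push_cast
  ring

lemma PP_add (a : ℝ) (j l : ℕ) : PP q a (j + l) = PP q a j * PP q (a + j) l := by
  rw [PP, PP, PP, Finset.prod_range_add]
  congr 1
  apply Finset.prod_congr rfl
  intro m _
  congr 1
  push_cast
  ring

lemma PP_reflect (a : ℝ) (k : ℕ) : PP q a k = (-1) ^ k * PP q (-a - k + 1) k := by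
  rw [PP, PP, ← Finset.prod_range_reflect]
  rw [show ((-1 : ℝ)) ^ k = ∏ _m ∈ Finset.range k, (-1 : ℝ) by simp, ← Finset.prod_mul_distrib]
  apply Finset.prod_congr rfl
  intro m hm
  have hmk : m + 1 ≤ k := Finset.mem_range.mp hm
  have h1 : ((k - 1 - m : ℕ) : ℝ) = (k : ℝ) - 1 - m := by
    rw [Nat.sub_sub, Nat.cast_sub (by omega)]
    push_cast
    ring
  rw [h1, show a + ((k:ℝ) - 1 - m) = -(-a - (k:ℝ) + 1 + m) by ring, ee_neg]
  ring

lemma PP_natneg_eq_zero {k j : ℕ} (h : k < j) : PP q (-(k:ℝ)) j = 0 := by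
  rw [PP]
  apply Finset.prod_eq_zero (Finset.mem_range.mpr h)
  simp [ee_zero]

lemma PP_one_ne_zero (hq0 : 0 < q) (hq1 : q ≠ 1) (k : ℕ) : PP q 1 k ≠ 0 := by
  rw [PP]
  apply Finset.prod_ne_zero_iff.mpr
  intro m _
  apply ee_ne_zero hq0 hq1
  positivity

lemma PP_shift_ne_zero (hq0 : 0 < q) (hq1 : q ≠ 1) {a : ℝ} {n : ℕ} (h : PP q a n ≠ 0)
    {k : ℕ} (hk : k ≤ n) : PP q a k ≠ 0 := by
  obtain ⟨l, rfl⟩ := Nat.exists_eq_add_of_le hk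
  rw [PP_add] at h
  exact fun h0 => h (by rw [h0, zero_mul])

/-- `PP (-(j+l)) j = (-1)^j * PP (1+l) j`. -/
lemma PP_neg_sum (j l : ℕ) : PP q (-(j:ℝ) - l) j = (-1) ^ j * PP q (1 + l) j := by
  rw [PP_reflect (a := -(j:ℝ) - l)]
  congr 2
  ring

/-- Saalschütz summand. -/
noncomputable def TT (q : ℝ) (k : ℕ) (A B C : ℝ) (j : ℕ) : ℝ :=
  PP q (-(k:ℝ)) j * PP q A j * PP q B j *
    (PP q (1+(j:ℝ)) (k-j) * PP q (C+(j:ℝ)) (k-j) * PP q (A+B-C+1-(k:ℝ)+(j:ℝ)) (k-j))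

lemma cert1 (hq0 : 0 < q) (j r' : ℕ) (A B C : ℝ) :
    PP q (-(j:ℝ)-(r':ℝ)-2) (j+1) * PP q A (j+1) * PP q B (j+1) *
      (PP q ((j:ℝ)+2) (r'+1) * PP q (C+(j:ℝ)+1) (r'+1) * PP q (A+B-C-(r':ℝ)) (r'+1))
    = (ee q ((j:ℝ)+(r':ℝ)+2) * ee q (C+(j:ℝ)+(r':ℝ)+1) * ee q (A+B-C-(j:ℝ)-(r':ℝ)-1)) *
      (PP q (-(j:ℝ)-(r':ℝ)-1) (j+1) * PP q A (j+1) * PP q B (j+1) *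
        (PP q ((j:ℝ)+2) r' * PP q (C+(j:ℝ)+1) r' * PP q (A+B-C+1-(r':ℝ)) r'))
    - (ee q ((j:ℝ)+(r':ℝ)+2) * ee q A * ee q B) *
      (PP q (-(j:ℝ)-(r':ℝ)-1) j * PP q (A+1) j * PP q (B+1) j *
        (PP q ((j:ℝ)+1) (r'+1) * PP q (C+(j:ℝ)+1) (r'+1) * PP q (A+B-C+1-(r':ℝ)) (r'+1))) := by
  set J := (j:ℝ); set R := (r':ℝ)
  have h1 : PP q (-J-R-2) (j+1) = ee q (-J-R-2) * PP q (-J-R-1) j := by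
    rw [PP_succ']; ring_nf
  have h2 : PP q A (j+1) = ee q A * PP q (A+1) j := PP_succ' A j
  have h3 : PP q B (j+1) = ee q B * PP q (B+1) j := PP_succ' B j
  have h4 : PP q (J+2) (r'+1) = PP q (J+2) r' * ee q (J+R+2) := by
    rw [PP_succ]; simp only [J, R]; ring_nf
  have h5 : PP q (C+J+1) (r'+1) = PP q (C+J+1) r' * ee q (C+J+R+1) := by
    rw [PP_succ]; simp only [J, R]; ring_nf
  have h6 : PP q (A+B-C-R) (r'+1) = ee q (A+B-C-R) * PP q (A+B-C+1-R) r' := by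
    rw [PP_succ']; ring_nf
  have h7 : PP q (-J-R-1) (j+1) = PP q (-J-R-1) j * ee q (-R-1) := by
    rw [PP_succ]; simp only [J, R]; ring_nf
  have h8 : PP q (J+1) (r'+1) = ee q (J+1) * PP q (J+2) r' := by
    rw [PP_succ']; ring_nf
  have h10 : PP q (A+B-C+1-R) (r'+1) = PP q (A+B-C+1-R) r' * ee q (A+B-C+1) := by
    rw [PP_succ]; simp only [J, R]; ring_nf
  have key := ee3 hq0 (A+B-C-J-R-1) (-J-R-2) (J+1)
  rw [h1, h2, h3, h4, h5, h6, h7, h8, h10]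
  rw [show (-J-R-2) + (J+1) = -R-1 by ring, show (A+B-C-J-R-1) + (J+1) = A+B-C-R by ring,
    show (A+B-C-J-R-1) - (-J-R-2) = A+B-C+1 by ring] at key
  linear_combination (-(PP q (-J-R-1) j * (ee q A * PP q (A+1) j) * (ee q B * PP q (B+1) j) *
    PP q (J+2) r' * PP q (C+J+1) r' * PP q (A+B-C+1-R) r' * ee q (J+R+2) * ee q (C+J+R+1))) * key

lemma cert0 (hq0 : 0 < q) (k : ℕ) (A B C : ℝ) :
    TT q (k+1) A B C 0 =
      ee q ((k:ℝ)+1) * ee q (C+(k:ℝ)) * ee q (A+B-C-(k:ℝ)) * TT q k A B C 0 := by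
  simp only [TT, PP_zero, Nat.cast_zero, add_zero, Nat.sub_zero, Nat.cast_add, Nat.cast_one,
    one_mul]
  have g1 : PP q 1 (k+1) = PP q 1 k * ee q (1+(k:ℝ)) := PP_succ 1 k
  have g2 : PP q C (k+1) = PP q C k * ee q (C+(k:ℝ)) := PP_succ C k
  have g3 : PP q (A+B-C+1-((k:ℝ)+1)) (k+1) = ee q (A+B-C-(k:ℝ)) * PP q (A+B-C+1-(k:ℝ)) k := by
    rw [show A+B-C+1-((k:ℝ)+1) = A+B-C-(k:ℝ) by ring, PP_succ']; ring_nf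
  rw [g1, g2, g3, show ee q (1+(k:ℝ)) = ee q ((k:ℝ)+1) by ring_nf]
  ring

lemma certK (hq0 : 0 < q) (k : ℕ) (A B C : ℝ) :
    TT q (k+1) A B C (k+1) =
      -(ee q ((k:ℝ)+1) * ee q A * ee q B) * TT q k (A+1) (B+1) (C+1) k := by
  simp only [TT, Nat.sub_self, PP_zero, mul_one]
  have hA : PP q A (k+1) = ee q A * PP q (A+1) k := PP_succ' A k
  have hB : PP q B (k+1) = ee q B * PP q (B+1) k := PP_succ' B k
  have hN : PP q (-((k:ℝ)+1)) (k+1) = -ee q ((k:ℝ)+1) * PP q (-(k:ℝ)) k := by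
    rw [PP_succ', ee_neg, show -((k:ℝ)+1)+1 = -(k:ℝ) by ring]
  rw [show ((k+1:ℕ):ℝ) = (k:ℝ)+1 by push_cast; ring] at *
  rw [hA, hB, hN]
  ring

lemma TT_top_zero (k : ℕ) (A B C : ℝ) : TT q k A B C (k+1) = 0 := by
  simp only [TT, PP_natneg_eq_zero (Nat.lt_succ_self k), zero_mul]

lemma certStep (hq0 : 0 < q) (k j : ℕ) (hj : j ≤ k) (A B C : ℝ) :
    TT q (k+1) A B C (j+1) =
      ee q ((k:ℝ)+1) * ee q (C+(k:ℝ)) * ee q (A+B-C-(k:ℝ)) * TT q k A B C (j+1)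
      - ee q ((k:ℝ)+1) * ee q A * ee q B * TT q k (A+1) (B+1) (C+1) j := by
  rcases eq_or_lt_of_le hj with rfl | hlt
  · rw [certK hq0 j A B C, TT_top_zero]
    ring
  · obtain ⟨r', rfl⟩ : ∃ r', k = j + r' + 1 := ⟨k - j - 1, by omega⟩
    have hc := cert1 hq0 j r' A B C
    simp only [TT]
    rw [show j + r' + 1 + 1 - (j+1) = r' + 1 by omega, show j + r' + 1 - (j+1) = r' by omega,
      show j + r' + 1 - j = r' + 1 by omega]
    push_cast
    ring_nf
    ring_nf at hc
    linear_combination hc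

lemma saal (hq0 : 0 < q) : ∀ (k : ℕ) (A B C : ℝ),
    ∑ j ∈ Finset.range (k+1), TT q k A B C j
      = (-1)^k * (PP q 1 k * PP q (C-A) k * PP q (C-B) k) := by
  intro k
  induction k with
  | zero => intro A B C; simp [TT, PP_zero]
  | succ k IH =>
    intro A B C
    rw [Finset.sum_range_succ']
    rw [Finset.sum_congr rfl (fun j hj => certStep hq0 k j
      (by have := Finset.mem_range.mp hj; omega) A B C)]
    rw [Finset.sum_sub_distrib, ← Finset.mul_sum, ← Finset.mul_sum]
    have e1 : ∑ j ∈ Finset.range (k+1), TT q k A B C (j+1)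
        = ∑ j ∈ Finset.range (k+1), TT q k A B C j + TT q k A B C (k+1) - TT q k A B C 0 := by
      have h1 := Finset.sum_range_succ' (fun j => TT q k A B C j) (k+1)
      have h2 := Finset.sum_range_succ (fun j => TT q k A B C j) (k+1)
      linarith [h1, h2]
    rw [e1, TT_top_zero, cert0 hq0 k A B C, IH A B C, IH (A+1) (B+1) (C+1)]
    have p1 : PP q 1 (k+1) = PP q 1 k * ee q ((k:ℝ)+1) := by rw [PP_succ]; ring_nf
    have p2 : PP q (C-A) (k+1) = PP q (C-A) k * ee q (C-A+(k:ℝ)) := PP_succ _ k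
    have p3 : PP q (C-B) (k+1) = PP q (C-B) k * ee q (C-B+(k:ℝ)) := PP_succ _ k
    rw [p1, p2, p3, show C+1-(A+1) = C-A by ring, show C+1-(B+1) = C-B by ring]
    have key := ee3 hq0 A (A+B-C-(k:ℝ)) (C+(k:ℝ)-A)
    rw [show (A+B-C-(k:ℝ)) + (C+(k:ℝ)-A) = B by ring,
      show A + (C+(k:ℝ)-A) = C+(k:ℝ) by ring,
      show C+(k:ℝ)-A = C-A+(k:ℝ) by ring,
      show A - (A+B-C-(k:ℝ)) = C-B+(k:ℝ) by ring] at key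
    linear_combination (-((-1)^k) * PP q 1 k * PP q (C-A) k * PP q (C-B) k * ee q ((k:ℝ)+1)) * key

lemma TT_right_zero {k j : ℕ} (h : k < j) (A B C : ℝ) : TT q k A B C j = 0 := by
  simp only [TT, PP_natneg_eq_zero h, zero_mul]


lemma PP_one_shift_ne_zero (hq0 : 0 < q) (hq1 : q ≠ 1) (l j : ℕ) :
    PP q (1 + (l:ℝ)) j ≠ 0 := by
  rw [PP]
  apply Finset.prod_ne_zero_iff.mpr
  intro m _
  apply ee_ne_zero hq0 hq1
  positivity

/-- The Sears summand. -/
noncomputable def SL (q : ℝ) (n : ℕ) (w x y d v : ℝ) (k : ℕ) : ℝ :=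
  PP q (-(n:ℝ)) k * PP q w k * PP q x k * PP q y k *
    (PP q (1+(k:ℝ)) (n-k) * PP q (d+(k:ℝ)) (n-k) * PP q (v+(k:ℝ)) (n-k) *
     PP q (w+x+y+1-(n:ℝ)-d-v+(k:ℝ)) (n-k))

/-- The inner double-sum term. -/
noncomputable def GG (q : ℝ) (n : ℕ) (w x y d v : ℝ) (k j : ℕ) : ℝ :=
  (PP q (-(n:ℝ)) k * PP q w k *
    (PP q (1+(k:ℝ)) (n-k) * PP q (d+(k:ℝ)) (n-k) * PP q (w+1-(n:ℝ)-v+(k:ℝ)) (n-k) *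
     PP q (d+v-x-y+(k:ℝ)) (n-k))) *
  ((-1)^k * (PP q 1 k)⁻¹ * TT q k x y d j)

lemma step6 (hq0 : 0 < q) (hq1 : q ≠ 1) (n j l : ℕ) (hjl : j + l ≤ n) (w x y d v : ℝ) :
    GG q n w x y d v (j+l) j =
      (PP q (-(n:ℝ)) j * PP q w j * PP q x j * PP q y j *
        (PP q (1+(j:ℝ)) (n-j) * PP q (d+(j:ℝ)) (n-j))) *
      ((PP q 1 (n-j))⁻¹ * TT q (n-j) (w+(j:ℝ)) (d-x-y) (w+1-(n:ℝ)-v+(j:ℝ)) l) := by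
  obtain ⟨r, rfl⟩ : ∃ r, n = j + l + r := ⟨n - j - l, by omega⟩
  simp only [GG, TT]
  rw [show j + l + r - (j + l) = r by omega, show j + l + r - j = l + r by omega,
    show j + l - j = l by omega, show (l + r) - l = r by omega]
  -- expand the composite pochhammers
  have ha : PP q (-((j+l+r:ℕ):ℝ)) (j+l) = PP q (-((j+l+r:ℕ):ℝ)) j *
      PP q (-((j+l+r:ℕ):ℝ)+(j:ℝ)) l := PP_add _ j l
  have hb : PP q w (j+l) = PP q w j * PP q (w+(j:ℝ)) l := PP_add w j l
  have hc : PP q (-((j+l:ℕ):ℝ)) j = (-1)^j * PP q (1+(l:ℝ)) j := by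
    push_cast
    rw [show -((j:ℝ)+(l:ℝ)) = -(j:ℝ)-(l:ℝ) by ring]
    exact PP_neg_sum j l
  have hd : PP q 1 (j+l) = PP q 1 l * PP q (1+(l:ℝ)) j := by
    rw [Nat.add_comm j l, PP_add 1 l j]
  have he : PP q (x+y-d+1-((j+l:ℕ):ℝ)+(j:ℝ)) l = (-1)^l * PP q (d-x-y) l := by
    rw [PP_reflect (x+y-d+1-((j+l:ℕ):ℝ)+(j:ℝ)) l]
    congr 2
    push_cast
    ring
  have hf : PP q (1+(j:ℝ)) (l+r) = PP q (1+(j:ℝ)) l * PP q (1+(j:ℝ)+(l:ℝ)) r := PP_add _ l r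
  have hg : PP q (d+(j:ℝ)) (l+r) = PP q (d+(j:ℝ)) l * PP q (d+(j:ℝ)+(l:ℝ)) r := PP_add _ l r
  have hh : PP q 1 (l+r) = PP q 1 l * PP q (1+(l:ℝ)) r := PP_add 1 l r
  rw [ha, hb, hc, hd, he, hf, hg, hh]
  have h1 : PP q 1 l ≠ 0 := PP_one_ne_zero hq0 hq1 l
  have h2 : PP q (1+(l:ℝ)) j ≠ 0 := PP_one_shift_ne_zero hq0 hq1 l j
  have h3 : PP q (1+(l:ℝ)) r ≠ 0 := PP_one_shift_ne_zero hq0 hq1 l r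
  have hp : ∀ m:ℕ, (-1:ℝ)^(m*2) = 1 := fun m => Even.neg_one_pow ⟨m, by ring⟩
  field_simp
  push_cast
  ring_nf
  simp only [hp, one_mul, mul_one]

lemma rewriteA (hq0 : 0 < q) (hq1 : q ≠ 1) (n : ℕ) (w x y d v : ℝ) {k : ℕ} (hk : k ≤ n) :
    SL q n w (d-x) (d-y) d (w+1-(n:ℝ)-v) k = ∑ j ∈ Finset.range (n+1), GG q n w x y d v k j := by
  have hsub : ∑ j ∈ Finset.range (n+1), GG q n w x y d v k j
      = ∑ j ∈ Finset.range (k+1), GG q n w x y d v k j := by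
    refine (Finset.sum_subset (by intro a ha; simp only [Finset.mem_range] at *; omega) ?_).symm
    intro j hj hjn
    simp only [Finset.mem_range] at hj hjn
    have : k < j := by omega
    simp [GG, TT_right_zero this]
  rw [hsub]
  simp only [GG, ← Finset.mul_sum]
  rw [saal hq0 k x y d]
  simp only [SL]
  rw [show w+(d-x)+(d-y)+1-(n:ℝ)-d-(w+1-(n:ℝ)-v)+(k:ℝ) = d+v-x-y+(k:ℝ) by ring]
  have h1 : PP q 1 k ≠ 0 := PP_one_ne_zero hq0 hq1 k
  have hp : (-1:ℝ)^k * (-1:ℝ)^k = 1 := by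
    rw [← pow_add]; exact Even.neg_one_pow ⟨k, by ring⟩
  field_simp
  linear_combination (-(PP q (-(n:ℝ)) k * PP q w k * (PP q (1+(k:ℝ)) (n-k) * PP q (d+(k:ℝ)) (n-k) *
    PP q (w+1-(n:ℝ)-v+(k:ℝ)) (n-k) * PP q (d+v-x-y+(k:ℝ)) (n-k)) * (PP q (d-x) k * PP q (d-y) k))) * hp

lemma rewriteB (hq0 : 0 < q) (hq1 : q ≠ 1) (n : ℕ) (w x y d v : ℝ) {j : ℕ} (hj : j ≤ n) :
    ∑ k ∈ Finset.range (n+1), GG q n w x y d v k j = SL q n w x y d v j := by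
  have hsub : ∑ k ∈ Finset.range (n+1), GG q n w x y d v k j
      = ∑ k ∈ Finset.Ico j (n+1), GG q n w x y d v k j := by
    refine (Finset.sum_subset (by intro a ha; simp only [Finset.mem_Ico, Finset.mem_range] at *; omega) ?_).symm
    intro k hk hkn
    simp only [Finset.mem_Ico, Finset.mem_range] at hk hkn
    have : k < j := by omega
    simp [GG, TT_right_zero this]
  rw [hsub, Finset.sum_Ico_eq_sum_range]
  rw [Finset.sum_congr rfl (fun l hl => step6 hq0 hq1 n j l
    (by have := Finset.mem_range.mp hl; omega) w x y d v)]
  rw [← Finset.mul_sum, ← Finset.mul_sum]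
  rw [show n + 1 - j = (n-j)+1 by omega]
  rw [saal hq0 (n-j) (w+(j:ℝ)) (d-x-y) (w+1-(n:ℝ)-v+(j:ℝ))]
  rw [show w+1-(n:ℝ)-v+(j:ℝ) - (w+(j:ℝ)) = 1-(n:ℝ)-v by ring,
    show w+1-(n:ℝ)-v+(j:ℝ) - (d-x-y) = w+x+y+1-(n:ℝ)-d-v+(j:ℝ) by ring]
  rw [PP_reflect (1-(n:ℝ)-v) (n-j)]
  rw [show -(1-(n:ℝ)-v) - ((n-j:ℕ):ℝ) + 1 = v + (j:ℝ) by
    rw [Nat.cast_sub hj]; ring]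
  simp only [SL]
  have h1 : PP q 1 (n-j) ≠ 0 := PP_one_ne_zero hq0 hq1 (n-j)
  have hp : (-1:ℝ)^(n-j) * (-1:ℝ)^(n-j) = 1 := by
    rw [← pow_add]; exact Even.neg_one_pow ⟨n-j, by ring⟩
  field_simp
  linear_combination (PP q (-(n:ℝ)) j * PP q w j * PP q x j * PP q y j * (PP q (1+(j:ℝ)) (n-j) *
    PP q (d+(j:ℝ)) (n-j)) * (PP q (v+(j:ℝ)) (n-j) *
    PP q (w+x+y+1-(n:ℝ)-d-v+(j:ℝ)) (n-j))) * hp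

lemma sears (hq0 : 0 < q) (hq1 : q ≠ 1) (n : ℕ) (w x y d v : ℝ) :
    ∑ k ∈ Finset.range (n+1), SL q n w x y d v k
      = ∑ k ∈ Finset.range (n+1), SL q n w (d-x) (d-y) d (w+1-(n:ℝ)-v) k := by
  rw [Finset.sum_congr rfl (fun k hk => rewriteA hq0 hq1 n w x y d v
    (by have := Finset.mem_range.mp hk; omega))]
  rw [Finset.sum_comm]
  rw [Finset.sum_congr rfl (fun j hj => rewriteB hq0 hq1 n w x y d v
    (by have := Finset.mem_range.mp hj; omega))]


lemma qnum_eq (u : ℝ) : qnum q u = ee q u / ee q 1 := rfl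

lemma qpoch_eq (a : ℝ) (k : ℕ) : qpoch q a k = PP q a k / (ee q 1) ^ k := by
  simp [qpoch, PP, qnum_eq, Finset.prod_div_distrib]

lemma ee_one_ne_zero (hq0 : 0 < q) (hq1 : q ≠ 1) : ee q 1 ≠ 0 :=
  ee_ne_zero hq0 hq1 one_ne_zero

lemma qpoch_one_ne_zero (hq0 : 0 < q) (hq1 : q ≠ 1) (k : ℕ) : qpoch q 1 k ≠ 0 := by
  rw [qpoch_eq]
  exact div_ne_zero (PP_one_ne_zero hq0 hq1 k) (pow_ne_zero _ (ee_one_ne_zero hq0 hq1))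

lemma qpoch_add (a : ℝ) (j l : ℕ) : qpoch q a (j + l) = qpoch q a j * qpoch q (a + j) l := by
  rw [qpoch, qpoch, qpoch, Finset.prod_range_add]
  congr 1
  apply Finset.prod_congr rfl
  intro m _
  congr 1
  push_cast
  ring

lemma PP_ne_zero_of_qpoch {a : ℝ} {k : ℕ} (h : qpoch q a k ≠ 0) : PP q a k ≠ 0 := by
  rw [qpoch_eq] at h
  exact fun h0 => h (by rw [h0, zero_div])

lemma qpoch_shift_ne_zero {a : ℝ} {n : ℕ} (h : qpoch q a n ≠ 0) {k : ℕ} (hk : k ≤ n) :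
    qpoch q a k ≠ 0 := by
  obtain ⟨l, rfl⟩ := Nat.exists_eq_add_of_le hk
  rw [qpoch_add] at h
  exact fun h0 => h (by rw [h0, zero_mul])

set_option maxHeartbeats 1000000 in
lemma conv (hq0 : 0 < q) (hq1 : q ≠ 1) (n k : ℕ) (hk : k ≤ n) (w x y d v f1 : ℝ)
    (hf : f1 = w + x + y + 1 - (n:ℝ) - d - v)
    (hd : qpoch q d n ≠ 0) (hv : qpoch q v n ≠ 0) (hfz : qpoch q f1 n ≠ 0) :
    (ee q 1)^(4*n) * (qpoch q 1 n * qpoch q d n * qpoch q v n * qpoch q f1 n *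
      (qpoch q (-(n:ℝ)) k * qpoch q w k * qpoch q x k * qpoch q y k /
       (qpoch q 1 k * qpoch q d k * qpoch q v k * qpoch q f1 k)))
    = SL q n w x y d v k := by
  obtain ⟨r, rfl⟩ := Nat.exists_eq_add_of_le hk
  have e1 : qpoch q 1 (k+r) = qpoch q 1 k * qpoch q (1+(k:ℝ)) r := qpoch_add 1 k r
  have e2 : qpoch q d (k+r) = qpoch q d k * qpoch q (d+(k:ℝ)) r := qpoch_add d k r
  have e3 : qpoch q v (k+r) = qpoch q v k * qpoch q (v+(k:ℝ)) r := qpoch_add v k r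
  have e4 : qpoch q f1 (k+r) = qpoch q f1 k * qpoch q (f1+(k:ℝ)) r := qpoch_add f1 k r
  have n1 : qpoch q 1 k ≠ 0 := qpoch_one_ne_zero hq0 hq1 k
  have n2 : qpoch q d k ≠ 0 := qpoch_shift_ne_zero hd (by omega)
  have n3 : qpoch q v k ≠ 0 := qpoch_shift_ne_zero hv (by omega)
  have n4 : qpoch q f1 k ≠ 0 := qpoch_shift_ne_zero hfz (by omega)
  have hE : ee q 1 ≠ 0 := ee_one_ne_zero hq0 hq1
  have m1 : PP q 1 k ≠ 0 := PP_one_ne_zero hq0 hq1 k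
  have m2 : PP q d k ≠ 0 := PP_ne_zero_of_qpoch n2
  have m3 : PP q v k ≠ 0 := PP_ne_zero_of_qpoch n3
  have m4 : PP q f1 k ≠ 0 := PP_ne_zero_of_qpoch n4
  simp only [SL, show k + r - k = r by omega]
  rw [e1, e2, e3, e4]
  simp only [qpoch_eq]
  subst hf
  push_cast at m4 ⊢
  field_simp
  ring


lemma SL_swap (n : ℕ) (w x y d v : ℝ) (k : ℕ) : SL q n w x y d v k = SL q n w y x d v k := by
  simp only [SL]
  rw [show w+x+y+1-(n:ℝ)-d-v+(k:ℝ) = w+y+x+1-(n:ℝ)-d-v+(k:ℝ) by ring]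
  ring

end QRacahAux

open QRacahAux in
theorem stmt_9 (q : ℝ) (hq0 : 0 < q) (hq1 : q ≠ 1) (n : ℕ) (a b α β s : ℝ)
    (hnz1 : qpoch q (a - b + 1) n ≠ 0)
    (hnz2 : qpoch q (β + 1) n * qpoch q (a + b + α + 1) n ≠ 0)
    (hnz3 : qpoch q (α + 1) n * qpoch q (-a - b + β + 1) n ≠ 0) :
    (qpoch q (β + 1) n * qpoch q (a + b + α + 1) n *
        ∑ k ∈ Finset.range (n + 1),
          qpoch q (-(n : ℝ)) k * qpoch q (α + β + (n : ℝ) + 1) k * qpoch q (a - s) k *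
              qpoch q (a + s + 1) k /
            (qpoch q 1 k * qpoch q (a - b + 1) k * qpoch q (β + 1) k *
              qpoch q (a + b + α + 1) k) =
      qpoch q (α + 1) n * qpoch q (-a - b + β + 1) n *
        ∑ k ∈ Finset.range (n + 1),
          qpoch q (-(n : ℝ)) k * qpoch q (α + β + (n : ℝ) + 1) k * qpoch q (-b - s) k *
              qpoch q (-b + s + 1) k /
            (qpoch q 1 k * qpoch q (a - b + 1) k * qpoch q (α + 1) k *
              qpoch q (-a - b + β + 1) k)) ∧
    racahU q a b α β n s =
      qpoch q (a - b + 1) n * qpoch q (α + 1) n * qpoch q (-a - b + β + 1) n / qfact q n *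
        ∑ k ∈ Finset.range (n + 1),
          qpoch q (-(n : ℝ)) k * qpoch q (α + β + (n : ℝ) + 1) k * qpoch q (-b - s) k *
              qpoch q (-b + s + 1) k /
            (qpoch q 1 k * qpoch q (a - b + 1) k * qpoch q (α + 1) k *
              qpoch q (-a - b + β + 1) k) := by
  have hnzB : qpoch q (β+1) n ≠ 0 := fun h => hnz2 (by rw [h, zero_mul])
  have hnzAB : qpoch q (a+b+α+1) n ≠ 0 := fun h => hnz2 (by rw [h, mul_zero])
  have hnzA : qpoch q (α+1) n ≠ 0 := fun h => hnz3 (by rw [h, zero_mul])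
  have hnzBB : qpoch q (-a-b+β+1) n ≠ 0 := fun h => hnz3 (by rw [h, mul_zero])
  have hE : ee q 1 ≠ 0 := ee_one_ne_zero hq0 hq1
  have h1n : qpoch q 1 n ≠ 0 := qpoch_one_ne_zero hq0 hq1 n
  set A : ℝ := (ee q 1)^(4*n) * (qpoch q 1 n * qpoch q (a-b+1) n) with hA
  have hAnz : A ≠ 0 := mul_ne_zero (pow_ne_zero _ hE) (mul_ne_zero h1n hnz1)
  have key : qpoch q (β + 1) n * qpoch q (a + b + α + 1) n *
        ∑ k ∈ Finset.range (n + 1),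
          qpoch q (-(n : ℝ)) k * qpoch q (α + β + (n : ℝ) + 1) k * qpoch q (a - s) k *
              qpoch q (a + s + 1) k /
            (qpoch q 1 k * qpoch q (a - b + 1) k * qpoch q (β + 1) k *
              qpoch q (a + b + α + 1) k) =
      qpoch q (α + 1) n * qpoch q (-a - b + β + 1) n *
        ∑ k ∈ Finset.range (n + 1),
          qpoch q (-(n : ℝ)) k * qpoch q (α + β + (n : ℝ) + 1) k * qpoch q (-b - s) k *
              qpoch q (-b + s + 1) k /
            (qpoch q 1 k * qpoch q (a - b + 1) k * qpoch q (α + 1) k *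
              qpoch q (-a - b + β + 1) k) := by
    apply mul_left_cancel₀ hAnz
    have hterm : ∀ k ∈ Finset.range (n+1),
        (A * (qpoch q (β + 1) n * qpoch q (a + b + α + 1) n)) *
          (qpoch q (-(n : ℝ)) k * qpoch q (α + β + (n : ℝ) + 1) k * qpoch q (a - s) k *
              qpoch q (a + s + 1) k /
            (qpoch q 1 k * qpoch q (a - b + 1) k * qpoch q (β + 1) k *
              qpoch q (a + b + α + 1) k)) =
        SL q n (α + β + (n : ℝ) + 1) (a-s) (a+s+1) (a-b+1) (β+1) k := by
      intro k hk
      have hc := conv hq0 hq1 n k (by have := Finset.mem_range.mp hk; omega)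
        (α + β + (n : ℝ) + 1) (a-s) (a+s+1) (a-b+1) (β+1) (a+b+α+1)
        (by ring) hnz1 hnzB hnzAB
      rw [hA]
      linear_combination hc
    have htermR : ∀ k ∈ Finset.range (n+1),
        (A * (qpoch q (α + 1) n * qpoch q (-a - b + β + 1) n)) *
          (qpoch q (-(n : ℝ)) k * qpoch q (α + β + (n : ℝ) + 1) k * qpoch q (-b - s) k *
              qpoch q (-b + s + 1) k /
            (qpoch q 1 k * qpoch q (a - b + 1) k * qpoch q (α + 1) k *
              qpoch q (-a - b + β + 1) k)) =
        SL q n (α + β + (n : ℝ) + 1) (-b-s) (-b+s+1) (a-b+1) (α+1) k := by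
      intro k hk
      have hc := conv hq0 hq1 n k (by have := Finset.mem_range.mp hk; omega)
        (α + β + (n : ℝ) + 1) (-b-s) (-b+s+1) (a-b+1) (α+1) (-a-b+β+1)
        (by ring) hnz1 hnzA hnzBB
      rw [hA]
      linear_combination hc
    have hsears := sears hq0 hq1 n (α + β + (n : ℝ) + 1) (a-s) (a+s+1) (a-b+1) (β+1)
    simp only [show (a-b+1)-(a-s) = -b+s+1 by ring, show (a-b+1)-(a+s+1) = -b-s by ring,
      show α+β+(n:ℝ)+1+1-(n:ℝ)-(β+1) = α+1 by ring] at hsears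
    calc A * (qpoch q (β + 1) n * qpoch q (a + b + α + 1) n *
          ∑ k ∈ Finset.range (n + 1),
            qpoch q (-(n : ℝ)) k * qpoch q (α + β + (n : ℝ) + 1) k * qpoch q (a - s) k *
                qpoch q (a + s + 1) k /
              (qpoch q 1 k * qpoch q (a - b + 1) k * qpoch q (β + 1) k *
                qpoch q (a + b + α + 1) k))
        = ∑ k ∈ Finset.range (n + 1),
            (A * (qpoch q (β + 1) n * qpoch q (a + b + α + 1) n)) *
            (qpoch q (-(n : ℝ)) k * qpoch q (α + β + (n : ℝ) + 1) k * qpoch q (a - s) k *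
                qpoch q (a + s + 1) k /
              (qpoch q 1 k * qpoch q (a - b + 1) k * qpoch q (β + 1) k *
                qpoch q (a + b + α + 1) k)) := by
          rw [← Finset.mul_sum]
          ring
      _ = ∑ k ∈ Finset.range (n + 1),
            SL q n (α + β + (n : ℝ) + 1) (a-s) (a+s+1) (a-b+1) (β+1) k :=
          Finset.sum_congr rfl hterm
      _ = ∑ k ∈ Finset.range (n + 1),
            SL q n (α + β + (n : ℝ) + 1) (-b+s+1) (-b-s) (a-b+1) (α+1) k := hsears
      _ = ∑ k ∈ Finset.range (n + 1),
            SL q n (α + β + (n : ℝ) + 1) (-b-s) (-b+s+1) (a-b+1) (α+1) k :=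
          Finset.sum_congr rfl (fun k _ => SL_swap n _ _ _ _ _ k)
      _ = ∑ k ∈ Finset.range (n + 1),
            (A * (qpoch q (α + 1) n * qpoch q (-a - b + β + 1) n)) *
            (qpoch q (-(n : ℝ)) k * qpoch q (α + β + (n : ℝ) + 1) k * qpoch q (-b - s) k *
                qpoch q (-b + s + 1) k /
              (qpoch q 1 k * qpoch q (a - b + 1) k * qpoch q (α + 1) k *
                qpoch q (-a - b + β + 1) k)) :=
          (Finset.sum_congr rfl htermR).symm
      _ = A * (qpoch q (α + 1) n * qpoch q (-a - b + β + 1) n *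
          ∑ k ∈ Finset.range (n + 1),
            qpoch q (-(n : ℝ)) k * qpoch q (α + β + (n : ℝ) + 1) k * qpoch q (-b - s) k *
                qpoch q (-b + s + 1) k /
              (qpoch q 1 k * qpoch q (a - b + 1) k * qpoch q (α + 1) k *
                qpoch q (-a - b + β + 1) k)) := by
          rw [← Finset.mul_sum]
          ring
  refine ⟨key, ?_⟩
  rw [racahU]
  linear_combination (qpoch q (a-b+1) n / qfact q n) * key
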